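/- Every subgraph of a tight labeled forest is a tight labeled forest. That is, if F is a finite forest whose vertices are distinct positive integers and F is tight, and F' is any subgraph of F (which is automatically a forest), then F' is tight. -/

import Mathlib

/-- A list of elements of a linear order is *tight* if it contains no three-term
subsequence order-isomorphic to 231, 312 or 321. -/
def TightList {α : Type*} [LinearOrder α] (l : List α) : Prop :=
  ∀ a b c : α, [a, b, c].Sublist l →
    ¬(c < a ∧ a < b) ∧ ¬(b < c ∧ c < a) ∧ ¬(c < b ∧ b < a)

/-- A simple graph on a linearly ordered vertex type is a *tight forest* if it is
acyclic and, rooting each connected component at its minimum vertex, the label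
sequence of every path starting at a root is tight. -/
def IsTightForest {V : Type*} [LinearOrder V] (F : SimpleGraph V) : Prop :=
  F.IsAcyclic ∧ ∀ (r v : V), (∀ w, F.Reachable r w → r ≤ w) →
    ∀ p : F.Walk r v, p.IsPath → TightList p.support

open SimpleGraph

private lemma tight_sublist {α : Type*} [LinearOrder α] {l₁ l₂ : List α}
    (h : l₁.Sublist l₂) (ht : TightList l₂) : TightList l₁ :=
  fun a b c hs => ht a b c (hs.trans h)

private lemma tight_cons {α : Type*} [LinearOrder α] {l : List α} {r : α}
    (hmin : ∀ x ∈ l, r < x) (ht : TightList l) : TightList (r :: l) := by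
  intro a b c hs
  cases hs with
  | cons _ h => exact ht a b c h
  | cons_cons _ h =>
    have hb := hmin b (h.subset (by simp))
    have hc := hmin c (h.subset (by simp))
    exact ⟨fun hh => absurd hh.1 (lt_asymm hc), fun hh => absurd hh.2 (lt_asymm hc),
      fun hh => absurd hh.2 (lt_asymm hb)⟩

private lemma eq_of_split {α : Type*} {x : α} :
    ∀ {a c b d : List α}, a ++ x :: b = c ++ x :: d → x ∉ a → x ∉ c → a = c ∧ b = d := by
  intro a
  induction a with
  | nil =>
    intro c b d h hxa hxc
    cases c with
    | nil => simpa using h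
    | cons y c' =>
      simp only [List.nil_append, List.cons_append, List.cons.injEq] at h
      exact absurd (h.1 ▸ List.mem_cons_self) hxc
  | cons y a' ih =>
    intro c b d h hxa hxc
    cases c with
    | nil =>
      simp only [List.nil_append, List.cons_append, List.cons.injEq] at h
      exact absurd (h.1 ▸ List.mem_cons_self) hxa
    | cons z c' =>
      simp only [List.cons_append, List.cons.injEq] at h
      have := ih h.2 (fun hh => hxa (List.mem_cons_of_mem _ hh))
        (fun hh => hxc (List.mem_cons_of_mem _ hh))
      exact ⟨by rw [h.1, this.1], this.2⟩

/-- In a tight nodup list ending with `r`, any member `w > r` must be the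
penultimate element. -/
private lemma tight_last_two {α : Type*} [LinearOrder α] {t : List α} {r w : α}
    (hn : (t ++ [r]).Nodup) (ht : TightList (t ++ [r])) (hw : w ∈ t) (hrw : r < w) :
    ∃ l1, t = l1 ++ [w] := by
  obtain ⟨l1, l2, rfl⟩ := List.append_of_mem hw
  rcases List.eq_nil_or_concat l2 with rfl | ⟨l3, a, rfl⟩
  · exact ⟨l1, rfl⟩
  · exfalso
    simp only [List.concat_eq_append] at hn ht
    have hshape : (l1 ++ (w :: (l3 ++ [a]))) ++ [r] = l1 ++ (w :: (l3 ++ [a, r])) := by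
      simp
    have hsub : [w, a, r].Sublist ((l1 ++ (w :: (l3 ++ [a]))) ++ [r]) := by
      rw [hshape]
      refine List.Sublist.trans ?_ (List.sublist_append_right l1 _)
      exact List.Sublist.cons₂ _ (List.sublist_append_right l3 _)
    have htrip := ht w a r hsub
    -- get distinctness facts from nodup
    rw [hshape] at hn
    have hn1 : (w :: (l3 ++ [a, r])).Nodup := (List.nodup_append.mp hn).2.1
    have haw : a ≠ w := by
      intro h
      exact (List.nodup_cons.mp hn1).1 (h ▸ (by simp : a ∈ l3 ++ [a, r]))
    have har : a ≠ r := by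
      have h9 := (List.nodup_cons.mp hn1).2
      rw [List.nodup_append] at h9
      have h10 := h9.2.1
      intro h
      rw [h] at h10
      simp at h10
    rcases lt_trichotomy a w with h1 | h1 | h1
    · rcases lt_trichotomy a r with h2 | h2 | h2
      · exact htrip.2.1 ⟨h2, hrw⟩
      · exact har h2
      · exact htrip.2.2 ⟨h2, h1⟩
    · exact haw h1
    · exact htrip.1 ⟨hrw, h1⟩

private lemma walk_support_concat {V : Type*} {G : SimpleGraph V} {u v : V}
    (p : G.Walk u v) : ∃ t, p.support = t ++ [v] := by
  refine ⟨p.reverse.support.tail.reverse, ?_⟩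
  have h1 : p.reverse.support = v :: p.reverse.support.tail := Walk.support_eq_cons _
  have h2 : p.support.reverse = v :: p.reverse.support.tail := by
    rw [← Walk.support_reverse]; exact h1
  have := congrArg List.reverse h2
  simpa using this

private lemma adj_of_support_eq {V : Type*} {G : SimpleGraph V} {u v : V}
    (p : G.Walk u v) (h : p.support = [u, v]) : G.Adj u v := by
  cases p with
  | nil => simp at h
  | @cons _ x _ hadj p' =>
    rw [Walk.support_cons] at h
    have h2 : p'.support = [v] := by simpa using h
    have h3 : x = v := by
      have h4 := Walk.support_eq_cons p'
      rw [h2] at h4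
      exact (List.cons.injEq _ _ _ _ ▸ h4).1.symm
    exact h3 ▸ hadj

private lemma core {Vt : Type*} [Fintype Vt] [LinearOrder Vt] {F : SimpleGraph Vt}
    (hF : IsTightForest F) {r v : Vt} (p : F.Walk r v) (hp : p.IsPath)
    (hminp : ∀ w ∈ p.support, r ≤ w) : TightList p.support := by
  classical
  obtain ⟨r0, hr0S, hr0min⟩ := Set.exists_min_image {w | F.Reachable r w} id
    (Set.toFinite _) ⟨r, Reachable.refl r⟩
  have hr0 : F.Reachable r r0 := hr0S
  have hmin0 : ∀ w, F.Reachable r0 w → r0 ≤ w := fun w h => hr0min w (hr0.trans h)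
  obtain ⟨qw⟩ := hr0.symm
  set q : F.Walk r0 r := qw.bypass with hqdef
  have hq : q.IsPath := qw.bypass_isPath
  have hqt : TightList q.support := hF.2 r0 r hmin0 q hq
  obtain ⟨t, hts⟩ := walk_support_concat q
  have hpn : p.support.Nodup := (Walk.isPath_def p).mp hp
  by_cases hA : ∀ w ∈ p.support, w ∈ q.support → w = r
  · -- the appended walk q ++ p is a path
    have hrtail : r ∉ p.support.tail := by
      have := hpn
      rw [Walk.support_eq_cons p] at this
      exact (List.nodup_cons.mp this).1
    have happ : (q.append p).IsPath := by
      rw [Walk.isPath_def, Walk.support_append, List.nodup_append']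
      refine ⟨(Walk.isPath_def q).mp hq, ?_, ?_⟩
      · have := hpn
        rw [Walk.support_eq_cons p] at this
        exact (List.nodup_cons.mp this).2
      · intro a ha ha'
        have hap : a ∈ p.support := by
          rw [Walk.support_eq_cons p]; exact List.mem_cons_of_mem _ ha'
        exact hrtail ((hA a hap ha) ▸ ha')
    have htapp := hF.2 r0 v hmin0 _ happ
    have hsupp : (q.append p).support = t ++ p.support := by
      rw [Walk.support_append, hts, Walk.support_eq_cons p]
      simp
    rw [hsupp] at htapp
    exact tight_sublist (List.sublist_append_right t _) htapp
  · push_neg at hA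
    obtain ⟨w, hwp, hwq, hwr⟩ := hA
    have hrw : r < w := lt_of_le_of_ne (hminp w hwp) (Ne.symm hwr)
    have hqn : q.support.Nodup := (Walk.isPath_def q).mp hq
    have hn' : (t ++ [r]).Nodup := hts ▸ hqn
    have hrt : r ∉ t := by
      have := List.nodup_append'.mp hn'
      exact fun h => this.2.2 h (by simp)
    have hqt' : TightList (t ++ [r]) := hts ▸ hqt
    have hmem_t : ∀ u, u ∈ q.support → u ≠ r → u ∈ t := by
      intro u hu hur
      rw [hts] at hu
      rcases List.mem_append.mp hu with h | h
      · exact h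
      · simp at h; exact absurd h hur
    have hw_t : w ∈ t := hmem_t w hwq hwr
    obtain ⟨l1, hl1⟩ := tight_last_two hn' hqt' hw_t hrw
    -- decompose q at w
    have hq1 : (q.takeUntil w hwq).IsPath := hq.takeUntil hwq
    obtain ⟨t1, ht1⟩ := walk_support_concat (q.takeUntil w hwq)
    have hsupp : (q.takeUntil w hwq).support ++ (q.dropUntil w hwq).support.tail
        = q.support := by rw [← Walk.support_append, Walk.take_spec]
    have hkey : t1 ++ (w :: (q.dropUntil w hwq).support.tail) = l1 ++ (w :: [r]) := by
      have h0 : (t1 ++ [w]) ++ (q.dropUntil w hwq).support.tail = (l1 ++ [w]) ++ [r] := by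
        rw [← ht1, hsupp, hts, hl1]
      simpa [List.append_assoc] using h0
    have hwnott1 : w ∉ t1 := by
      have := (Walk.isPath_def _).mp hq1
      rw [ht1, List.nodup_append'] at this
      exact fun h => this.2.2 h (by simp)
    have hwnotl1 : w ∉ l1 := by
      have h0 : t.Nodup := (List.nodup_append'.mp hn').1
      rw [hl1, List.nodup_append'] at h0
      exact fun h => h0.2.2 h (by simp)
    obtain ⟨ht1l1, hdr⟩ := eq_of_split hkey hwnott1 hwnotl1
    have hdsupp : (q.dropUntil w hwq).support = [w, r] := by
      rw [Walk.support_eq_cons (q.dropUntil w hwq), hdr]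
    have hadj : F.Adj w r := adj_of_support_eq _ hdsupp
    -- p is nonnil; analyze it
    cases p with
    | nil =>
      rw [Walk.support_nil, List.mem_singleton] at hwp
      exact absurd hwp hwr
    | @cons _ x _ hadj2 p2 =>
      -- the initial segment of p up to w is the single edge r-w, so x = w
      have hσ : (Walk.cons hadj.symm Walk.nil : F.Walk r w).IsPath := by
        rw [Walk.cons_isPath_iff]
        exact ⟨Walk.IsPath.nil, by simp; exact fun h => hwr h.symm⟩
      have htτ : ((Walk.cons hadj2 p2).takeUntil w hwp).IsPath := hp.takeUntil hwp
      have heqp : (Walk.cons hadj2 p2).takeUntil w hwp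
          = Walk.cons hadj.symm Walk.nil := by
        have h0 := (isAcyclic_iff_path_unique.mp hF.1)
          ⟨(Walk.cons hadj2 p2).takeUntil w hwp, htτ⟩ ⟨Walk.cons hadj.symm Walk.nil, hσ⟩
        exact Subtype.ext_iff.mp h0
      have hpsupp2 : ((Walk.cons hadj2 p2).takeUntil w hwp).support = [r, w] := by
        rw [heqp]; simp
      have hx : x = w := by
        have h5 : (Walk.cons hadj2 p2).support
            = [r, w] ++ ((Walk.cons hadj2 p2).dropUntil w hwp).support.tail := by
          conv_lhs => rw [← Walk.take_spec _ hwp]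
          rw [Walk.support_append, hpsupp2]
        rw [Walk.support_cons, Walk.support_eq_cons p2] at h5
        simp only [List.cons_append, List.nil_append, List.cons.injEq] at h5
        exact h5.2.1
      have hx' : w = x := hx.symm
      subst hx'
      clear hx
      -- now build the path q1 ++ p2 from r0 to v
      have hrq1 : r ∉ (q.takeUntil w hwq).support := by
        rw [ht1, ht1l1]
        intro h
        rcases List.mem_append.mp h with h | h
        · exact hrt (hl1 ▸ List.mem_append_left _ h)
        · rw [List.mem_singleton] at h; exact hwr h.symm
      have hp2 : p2.IsPath ∧ r ∉ p2.support := by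
        rw [Walk.cons_isPath_iff] at hp; exact hp
      have hcom : ∀ u, u ∈ (q.takeUntil w hwq).support → u ∈ p2.support → u = w := by
        intro u hu1 hu2
        have huq : u ∈ q.support := Walk.support_takeUntil_subset q hwq hu1
        have hup : u ∈ (Walk.cons hadj2 p2).support := by
          rw [Walk.support_cons]; exact List.mem_cons_of_mem _ hu2
        have hur' : u ≠ r := fun h => hrq1 (h ▸ hu1)
        have hurlt : r < u := lt_of_le_of_ne (hminp u hup) (Ne.symm hur')
        obtain ⟨l1u, hl1u⟩ := tight_last_two hn' hqt' (hmem_t u huq hur') hurlt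
        have h6 : l1u ++ [u] = l1 ++ [w] := by rw [← hl1u, ← hl1]
        have h7 := List.append_inj' h6 rfl
        simpa using h7.2
      have hwp2 : w ∉ p2.support.tail := by
        have := (Walk.isPath_def p2).mp hp2.1
        rw [Walk.support_eq_cons p2] at this
        exact (List.nodup_cons.mp this).1
      have happ2 : ((q.takeUntil w hwq).append p2).IsPath := by
        rw [Walk.isPath_def, Walk.support_append, List.nodup_append']
        refine ⟨(Walk.isPath_def _).mp hq1, ?_, ?_⟩
        · have := (Walk.isPath_def p2).mp hp2.1
          rw [Walk.support_eq_cons p2] at this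
          exact (List.nodup_cons.mp this).2
        · intro a ha ha'
          have hap2 : a ∈ p2.support := by
            rw [Walk.support_eq_cons p2]; exact List.mem_cons_of_mem _ ha'
          exact hwp2 ((hcom a ha hap2) ▸ ha')
      have htapp2 := hF.2 r0 v hmin0 _ happ2
      have hsupp2 : ((q.takeUntil w hwq).append p2).support = l1 ++ p2.support := by
        rw [Walk.support_append, ht1, ht1l1, Walk.support_eq_cons p2]
        simp
      rw [hsupp2] at htapp2
      have htp2 : TightList p2.support :=
        tight_sublist (List.sublist_append_right l1 _) htapp2
      rw [Walk.support_cons]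
      refine tight_cons ?_ htp2
      intro x hx
      refine lt_of_le_of_ne (hminp x ?_) (fun h => hp2.2 (h ▸ hx))
      rw [Walk.support_cons]; exact List.mem_cons_of_mem _ hx
  
theorem stmt_13 (V : Finset ℕ) (hpos : ∀ v ∈ V, 0 < v)
    (F F' : SimpleGraph {x // x ∈ V}) (hsub : F' ≤ F) (hF : IsTightForest F) :
    IsTightForest F' := by
  constructor
  · intro v c hc
    have hedges : ∀ e ∈ c.edges, e ∈ F.edgeSet :=
      fun e he => edgeSet_mono hsub (Walk.edges_subset_edgeSet c he)
    exact hF.1 (c.transfer F hedges) (hc.transfer hedges)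
  · intro r v hmin p hp
    have hedges : ∀ e ∈ p.edges, e ∈ F.edgeSet :=
      fun e he => edgeSet_mono hsub (Walk.edges_subset_edgeSet p he)
    have h := core hF (p.transfer F hedges) (hp.transfer hedges) ?_
    · rwa [Walk.support_transfer] at h
    · intro w hw
      rw [Walk.support_transfer] at hw
      exact hmin w ⟨p.takeUntil w hw⟩
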